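/- Let A be a finite set and T an object of T⁺(A). If a simplex τ of NP(A) is a face of a layering of T, then there exists a morphism φ(τ) → T in T⁺(A). Conversely, if σ is a simplex of NP(A) such that there exists a morphism φ(σ) → T in T⁺(A), then σ is a face of a layering of T. -/

import Mathlib

open CategoryTheory Opposite

noncomputable section

/-- A map in `TopCat` is a homotopy equivalence. -/
def TopCat.IsHomotopyEquivMap {X Y : TopCat} (f : X ⟶ Y) : Prop :=
  ∃ g : Y ⟶ X, ContinuousMap.Homotopic (f ≫ g).hom (TopCat.Hom.hom (𝟙 X)) ∧ ContinuousMap.Homotopic (g ≫ f).hom (TopCat.Hom.hom (𝟙 Y))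

/-- A map of simplicial sets is a weak homotopy equivalence; since geometric realizations
are CW complexes, this is (by Whitehead's theorem) equivalent to the geometric
realization being a homotopy equivalence, which is how we phrase it. -/
def SSet.IsWeakHomotopyEquiv {X Y : SSet.{0}} (f : X ⟶ Y) : Prop :=
  TopCat.IsHomotopyEquivMap (SSet.toTop.map f)

/-- A simplicial set is weakly contractible iff its geometric realization (a CW complex)
is contractible. -/
def SSet.WeaklyContractible (X : SSet.{0}) : Prop :=
  ContractibleSpace (SSet.toTop.obj X)

/-- A functor is homotopy initial if for every object `c` of the target, the comma
category `φ/c` has weakly contractible nerve (classifying space). -/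
def CategoryTheory.Functor.HomotopyInitial {D : Type} [Category.{0} D] {C : Type}
    [Category.{0} C] (φ : D ⥤ C) : Prop :=
  ∀ c : C, SSet.WeaklyContractible (nerve (CostructuredArrow φ c))
/-- The poset of partitions of `A` (as setoids) strictly finer than the
indiscrete partition `⊤` and strictly coarser than the discrete partition `⊥`,
ordered by refinement (the coarser partition being the smaller one). -/
def PartitionPoset (A : Type) : Type := { r : Setoid A // r ≠ ⊥ ∧ r ≠ ⊤ }

instance (A : Type) : PartialOrder (PartitionPoset A) :=
  PartialOrder.lift (fun P => OrderDual.toDual P.1)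
    (fun _ _ h => Subtype.ext (OrderDual.toDual.injective h))

/-- The partition complex of `A`: the nerve of the poset of nontrivial partitions. -/
abbrev partitionComplex (A : Type) : SSet.{0} := nerve (PartitionPoset A)

/-- The blocks of a partition. -/
def PartitionPoset.blocks {A : Type} (P : PartitionPoset A) : Set (Set A) := P.1.classes

theorem PartitionPoset.le_iff {A : Type} {P Q : PartitionPoset A} :
    P ≤ Q ↔ Q.1 ≤ P.1 := Iff.rfl

/-- A finite rooted tree with set of leaves `A` and no unary vertices, encoded by its
set of edges, each edge being recorded as the set of leaves lying above it: this family
of sets contains `A` itself (the root edge) and all singletons (the leaf edges), and is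
laminar (any two members are nested or disjoint). Vertices correspond to the
non-singleton members, and automatically have at least two incoming edges. -/
structure TreeOn (A : Type) : Type where
  edges : Set (Set A)
  univ_mem : Set.univ ∈ edges
  singleton_mem : ∀ a : A, {a} ∈ edges
  nonempty_of_mem : ∀ e ∈ edges, e.Nonempty
  laminar : ∀ e ∈ edges, ∀ f ∈ edges, e ⊆ f ∨ f ⊆ e ∨ e ∩ f = ∅

namespace TreeOn

variable {A : Type}

@[ext] theorem ext {S T : TreeOn A} (h : S.edges = T.edges) : S = T := by
  cases S; cases T; congr

/-- `S ≤ T` iff `S` is obtained from `T` by contracting a set of inner edges. -/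
instance : PartialOrder (TreeOn A) where
  le S T := S.edges ⊆ T.edges
  le_refl S := subset_rfl
  le_trans S T U h h' := Set.Subset.trans h h'
  le_antisymm S T h h' := ext (Set.Subset.antisymm h h')

/-- An inner edge: an edge which is neither the root edge nor a leaf. -/
def IsInnerEdge (T : TreeOn A) (e : Set A) : Prop :=
  e ∈ T.edges ∧ e ≠ Set.univ ∧ ∀ a : A, e ≠ {a}

/-- The vertices of a tree: they correspond to the non-singleton edges (each such edge
has a vertex on top of it). -/
def vertices (T : TreeOn A) : Set (Set A) := { e ∈ T.edges | ∀ a : A, e ≠ {a} }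

/-- A leaf vertex: a vertex all of whose incoming edges are leaves, i.e. a non-singleton
edge all of whose proper subedges are singletons. -/
def IsLeafVertex (T : TreeOn A) (e : Set A) : Prop :=
  e ∈ T.vertices ∧ ∀ f ∈ T.edges, f ⊆ e → f ≠ e → ∃ a : A, f = {a}

/-- The corolla: the tree with no inner edges. -/
def corolla (A : Type) [Nonempty A] : TreeOn A where
  edges := {Set.univ} ∪ { s | ∃ a : A, s = {a} }
  univ_mem := Or.inl rfl
  singleton_mem a := Or.inr ⟨a, rfl⟩
  nonempty_of_mem e he := by
    rcases he with h | ⟨a, rfl⟩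
    · simp only [Set.mem_singleton_iff] at h; subst h; exact Set.univ_nonempty
    · exact ⟨a, rfl⟩
  laminar e he f hf := by
    rcases hf with h | ⟨a, rfl⟩
    · simp only [Set.mem_singleton_iff] at h; subst h; exact Or.inl (Set.subset_univ e)
    · by_cases ha : a ∈ e
      · exact Or.inr (Or.inl (by simpa using ha))
      · exact Or.inr (Or.inr (by ext x; simp; rintro hx rfl; exact ha hx))

end TreeOn

/-- The category `T⁺(A)` of trees with leaf set `A` having at least one inner edge;
it is a poset under the contraction order. -/
def TreePlus (A : Type) : Type := { T : TreeOn A // ∃ e, T.IsInnerEdge e }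

instance (A : Type) : PartialOrder (TreePlus A) := Subtype.partialOrder _
section ChainTree

variable {A : Type}

theorem Setoid.exists_of_ne_bot {r : Setoid A} (h : r ≠ ⊥) :
    ∃ x y : A, x ≠ y ∧ r x y := by
  by_contra hc
  push_neg at hc
  refine h (Setoid.ext fun a b => ?_)
  constructor
  · intro hr
    by_contra hne
    exact hc a b hne hr
  · rintro rfl
    exact r.refl' a

theorem Setoid.class_subset_or_disjoint {r s : Setoid A} (h : r ≤ s) {c d : Set A}
    (hc : c ∈ r.classes) (hd : d ∈ s.classes) : c ⊆ d ∨ c ∩ d = ∅ := by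
  obtain ⟨y, rfl⟩ := hc
  obtain ⟨z, rfl⟩ := hd
  by_cases hints : ({ x | r x y } ∩ { x | s x z } : Set A) = ∅
  · exact Or.inr hints
  · left
    obtain ⟨x, hxr, hxs⟩ := Set.nonempty_iff_ne_empty.2 hints
    intro w hw
    have hwx : r w x := r.trans' hw (r.symm' hxr)
    exact s.trans' (h hwx) hxs

/-- The underlying tree of a layered tree, i.e. of a chain of partitions: the functor
`φ` forgetting the layers and deleting unary vertices. Its edges are the root edge, the
leaf edges and the blocks of the partitions in the chain. -/
def chainTree {n : ℕ} (F : ComposableArrows (PartitionPoset A) n) : TreeOn A where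
  edges := {Set.univ} ∪ { s | ∃ a : A, s = {a} } ∪ ⋃ i, (F.obj i).blocks
  univ_mem := Or.inl (Or.inl rfl)
  singleton_mem a := Or.inl (Or.inr ⟨a, rfl⟩)
  nonempty_of_mem e he := by
    rcases he with (h | ⟨a, rfl⟩) | h
    · simp only [Set.mem_singleton_iff] at h
      subst h
      obtain ⟨x, y, -, -⟩ := Setoid.exists_of_ne_bot (F.obj 0).2.1
      exact ⟨x, trivial⟩
    · exact ⟨a, rfl⟩
    · simp only [Set.mem_iUnion] at h
      obtain ⟨i, hi⟩ := h
      obtain ⟨y, rfl⟩ := hi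
      exact ⟨y, (F.obj i).1.refl' y⟩
  laminar e he f hf := by
    have singcase : ∀ (g : Set A) (a : A), ({a} : Set A) ⊆ g ∨ g ⊆ {a} ∨ ({a} : Set A) ∩ g = ∅ := by
      intro g a
      by_cases hag : a ∈ g
      · exact Or.inl (by simpa using hag)
      · refine Or.inr (Or.inr ?_)
        ext x
        simp only [Set.mem_inter_iff, Set.mem_singleton_iff, Set.mem_empty_iff_false, iff_false,
          not_and]
        rintro rfl
        exact hag
    rcases he with (he | ⟨a, rfl⟩) | he
    · simp only [Set.mem_singleton_iff] at he
      subst he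
      exact Or.inr (Or.inl (Set.subset_univ f))
    · exact singcase f a
    · rcases hf with (hf | ⟨b, rfl⟩) | hf
      · simp only [Set.mem_singleton_iff] at hf
        subst hf
        exact Or.inl (Set.subset_univ e)
      · rcases singcase e b with h | h | h
        · exact Or.inr (Or.inl h)
        · exact Or.inl h
        · exact Or.inr (Or.inr (by rw [Set.inter_comm]; exact h))
      · simp only [Set.mem_iUnion] at he hf
        obtain ⟨i, hi⟩ := he
        obtain ⟨j, hj⟩ := hf
        rcases le_total i j with hij | hij
        · have hle : (F.obj j).1 ≤ (F.obj i).1 := leOfHom (F.map (homOfLE hij))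
          rcases Setoid.class_subset_or_disjoint hle hj hi with h | h
          · exact Or.inr (Or.inl h)
          · exact Or.inr (Or.inr (by rw [Set.inter_comm]; exact h))
        · have hle : (F.obj i).1 ≤ (F.obj j).1 := leOfHom (F.map (homOfLE hij))
          rcases Setoid.class_subset_or_disjoint hle hi hj with h | h
          · exact Or.inl h
          · exact Or.inr (Or.inr h)

/-- Any tree arising from a chain of nontrivial partitions has an inner edge. -/
theorem chainTree_exists_inner {n : ℕ} (F : ComposableArrows (PartitionPoset A) n) :
    ∃ e, (chainTree F).IsInnerEdge e := by
  obtain ⟨x, y, hxy, hr⟩ := Setoid.exists_of_ne_bot (F.obj 0).2.1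
  refine ⟨{ z | (F.obj 0).1 z y }, ?_, ?_, ?_⟩
  · exact Or.inr (Set.mem_iUnion.2 ⟨0, ⟨y, rfl⟩⟩)
  · intro h
    refine (F.obj 0).2.2 (Setoid.ext fun a b => ?_)
    have ha : (F.obj 0).1 a y := by rw [Set.eq_univ_iff_forall] at h; exact h a
    have hb : (F.obj 0).1 b y := by rw [Set.eq_univ_iff_forall] at h; exact h b
    simp only [Setoid.top_def]
    constructor
    · intro _; trivial
    · intro _; exact (F.obj 0).1.trans' ha ((F.obj 0).1.symm' hb)
  · intro a h
    have hx : x ∈ ({a} : Set A) := by rw [← h]; exact hr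
    have hy : y ∈ ({a} : Set A) := by rw [← h]; exact (F.obj 0).1.refl' y
    simp only [Set.mem_singleton_iff] at hx hy
    exact hxy (hx.trans hy.symm)

end ChainTree
/-- A simplicial subset (subcomplex) of a simplicial set: a family of sets of simplices
closed under the simplicial structure maps. -/
structure SSet.Subcomplex' (X : SSet.{0}) : Type 1 where
  carrier : ∀ n : SimplexCategoryᵒᵖ, Set (X.obj n)
  map_mem : ∀ {n m : SimplexCategoryᵒᵖ} (f : n ⟶ m) {x : X.obj n},
    x ∈ carrier n → X.map f x ∈ carrier m

/-- The simplicial set underlying a subcomplex. -/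
def SSet.Subcomplex'.toSSet {X : SSet.{0}} (S : X.Subcomplex') : SSet.{0} where
  obj n := { x : X.obj n // x ∈ S.carrier n }
  map f := TypeCat.ofHom fun x => ⟨X.map f x.1, S.map_mem f x.2⟩
  map_id n := by
    ext x
    simp
  map_comp f g := by
    ext x
    simp

/-- The blocks of the top (last) partition in a chain of partitions. -/
def topBlocks {A : Type} {n : ℕ} (F : ComposableArrows (PartitionPoset A) n) :
    Set (Set A) :=
  (F.obj (Fin.last n)).blocks

/-- A chain of partitions (i.e. a layered tree) is *elementary* if it has exactly one
non-unary vertex in each layer: passing from each partition in the chain to the next,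
exactly one block is subdivided, and the top partition has exactly one non-singleton
block (which is subdivided into leaves). -/
def IsElementary {A : Type} {n : ℕ} (F : ComposableArrows (PartitionPoset A) n) : Prop :=
  (∀ i : Fin n, ∃! b : Set A,
      b ∈ (F.obj i.castSucc).blocks ∧ b ∉ (F.obj i.succ).blocks) ∧
  (∃! b : Set A, b ∈ topBlocks F ∧ ∀ a : A, b ≠ {a})

/-- A simplex of the partition complex is a layering of the tree `T` if applying `φ`
(forgetting layers) to it yields exactly `T`. -/
def IsLayering {A : Type} {n : ℕ} (F : ComposableArrows (PartitionPoset A) n)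
    (T : TreeOn A) : Prop :=
  chainTree F = T

/-- The subcomplex `L(T)` of the partition complex generated by the elementary
layerings of the tree `T`. (For the corolla this is the empty subcomplex.) -/
def layeringSub (A : Type) (T : TreeOn A) : (partitionComplex A).Subcomplex' where
  carrier n := { σ | ∃ (m : SimplexCategory) (τ : (partitionComplex A).obj (op m))
      (g : n.unop ⟶ m), IsElementary τ ∧ IsLayering τ T ∧
      σ = (partitionComplex A).map g.op τ }
  map_mem {n m} f {x} hx := by
    obtain ⟨m', τ, g, he, hl, rfl⟩ := hx
    refine ⟨m', τ, f.unop ≫ g, he, hl, ?_⟩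
    rw [op_comp, (partitionComplex A).map_comp]
    rfl

/-- The subcomplex `Lᵛ(T)` of `L(T)` generated by the elementary layerings of `T`
having the leaf vertex `v` in the top layer. -/
def leafVertexSub (A : Type) (T : TreeOn A) (v : Set A) :
    (partitionComplex A).Subcomplex' where
  carrier n := { σ | ∃ (m : SimplexCategory) (τ : (partitionComplex A).obj (op m))
      (g : n.unop ⟶ m), IsElementary τ ∧ IsLayering τ T ∧ v ∈ topBlocks τ ∧
      σ = (partitionComplex A).map g.op τ }
  map_mem {n m} f {x} hx := by
    obtain ⟨m', τ, g, he, hl, hv, rfl⟩ := hx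
    refine ⟨m', τ, f.unop ≫ g, he, hl, hv, ?_⟩
    rw [op_comp, (partitionComplex A).map_comp]
    rfl
/-- The category of elements of a presheaf of sets: objects are pairs `(c, x)` with
`x ∈ X(c)`; morphisms `(c,x) ⟶ (c',x')` are morphisms `f : c ⟶ c'` of `C` with
`X(f)(x') = x`. -/
structure PElements {C : Type} [Category.{0} C] (X : Cᵒᵖ ⥤ Type) : Type where
  base : C
  elt : X.obj (op base)

instance PElements.category {C : Type} [Category.{0} C] (X : Cᵒᵖ ⥤ Type) :
    Category (PElements X) where
  Hom a b := { f : a.base ⟶ b.base // X.map f.op b.elt = a.elt }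
  id a := ⟨𝟙 a.base, by simp⟩
  comp {a b c} f g := ⟨f.1 ≫ g.1, by
    rw [op_comp, X.map_comp]; dsimp; rw [g.2, f.2]⟩
  id_comp f := by apply Subtype.ext; simp
  comp_id f := by apply Subtype.ext; simp
  assoc f g h := by apply Subtype.ext; simp

/-- The category of simplices `Δ/X` of a simplicial set `X`. -/
abbrev SSet.SimplexCat (X : SSet.{0}) : Type := PElements (C := SimplexCategory) X
/-- The functor `φ : Δ/NP(A) ⟶ T⁺(A)` sending a layered tree to its underlying tree,
forgetting the layers and deleting unary vertices. -/
def phiFunctor (A : Type) : SSet.SimplexCat (partitionComplex A) ⥤ TreePlus A where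
  obj σ := ⟨chainTree σ.elt, chainTree_exists_inner σ.elt⟩
  map {σ τ} f := homOfLE (by
    show chainTree σ.elt ≤ chainTree τ.elt
    intro e he
    rcases he with h | he
    · exact Or.inl h
    · simp only [Set.mem_iUnion] at he
      obtain ⟨i, hi⟩ := he
      rw [← f.2] at hi
      exact Or.inr (Set.mem_iUnion.2 ⟨_, hi⟩))
  map_id _ := Subsingleton.elim _ _
  map_comp _ _ := Subsingleton.elim _ _

namespace FaceLayeringAux

variable {A : Type}

/-- Join of a setoid with the equivalence collapsing a saturated set `e`. -/
def satJoin (Q : Setoid A) (e : Set A)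
    (hsat : ∀ ⦃a b : A⦄, Q a b → a ∈ e → b ∈ e) : Setoid A where
  r a b := Q a b ∨ (a ∈ e ∧ b ∈ e)
  iseqv := by
    constructor
    · intro a; exact Or.inl (Q.refl' a)
    · rintro a b (h | ⟨ha, hb⟩)
      · exact Or.inl (Q.symm' h)
      · exact Or.inr ⟨hb, ha⟩
    · rintro a b c (h | ⟨ha, hb⟩) (h' | ⟨hb', hc⟩)
      · exact Or.inl (Q.trans' h h')
      · exact Or.inr ⟨hsat (Q.symm' h) hb', hc⟩
      · exact Or.inr ⟨ha, hsat h' hb⟩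
      · exact Or.inr ⟨ha, hc⟩

theorem satJoin_rel {Q : Setoid A} {e : Set A}
    {hsat : ∀ ⦃a b : A⦄, Q a b → a ∈ e → b ∈ e} {a b : A} :
    satJoin Q e hsat a b ↔ Q a b ∨ (a ∈ e ∧ b ∈ e) := Iff.rfl

theorem satJoin_classes {Q : Setoid A} {e : Set A}
    {hsat : ∀ ⦃a b : A⦄, Q a b → a ∈ e → b ∈ e} :
    (satJoin Q e hsat).classes ⊆ insert e Q.classes := by
  rintro c ⟨y, rfl⟩
  by_cases hy : y ∈ e
  · left
    ext x
    simp only [Set.mem_setOf_eq, satJoin_rel]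
    constructor
    · rintro (h | ⟨hx, _⟩)
      · exact hsat (Q.symm' h) hy
      · exact hx
    · intro hx; exact Or.inr ⟨hx, hy⟩
  · right
    refine ⟨y, ?_⟩
    ext x
    simp only [Set.mem_setOf_eq, satJoin_rel]
    constructor
    · rintro (h | ⟨_, hy'⟩)
      · exact h
      · exact absurd hy' hy
    · exact Or.inl

theorem mem_satJoin_classes {Q : Setoid A} {e : Set A}
    {hsat : ∀ ⦃a b : A⦄, Q a b → a ∈ e → b ∈ e} (he : e.Nonempty) :
    e ∈ (satJoin Q e hsat).classes := by
  obtain ⟨y, hy⟩ := he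
  refine ⟨y, ?_⟩
  ext x
  simp only [Set.mem_setOf_eq, satJoin_rel]
  constructor
  · intro hx; exact Or.inr ⟨hx, hy⟩
  · rintro (h | ⟨hx, _⟩)
    · exact hsat (Q.symm' h) hy
    · exact hx

theorem bot_classes_singleton {c : Set A} (hc : c ∈ (⊥ : Setoid A).classes) :
    ∃ a : A, c = {a} := by
  obtain ⟨y, rfl⟩ := hc
  refine ⟨y, ?_⟩
  ext x
  simp only [Set.mem_setOf_eq, Set.mem_singleton_iff]
  constructor
  · intro h; rwa [Setoid.bot_def] at h
  · rintro rfl; exact (⊥ : Setoid A).refl' x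

/-- A class of a partition in `PartitionPoset` is never `univ`. -/
theorem class_ne_univ (P : PartitionPoset A) {c : Set A} (hc : c ∈ P.blocks) :
    c ≠ Set.univ := by
  obtain ⟨y, rfl⟩ := hc
  intro h
  refine P.2.2 (Setoid.ext fun a b => ?_)
  have ha : P.1 a y := by rw [Set.eq_univ_iff_forall] at h; exact h a
  have hb : P.1 b y := by rw [Set.eq_univ_iff_forall] at h; exact h b
  simp only [Setoid.top_def]
  exact ⟨fun _ => trivial, fun _ => P.1.trans' ha (P.1.symm' hb)⟩

/-- An inner edge has two distinct elements. -/
theorem inner_two {T : TreeOn A} {e : Set A} (he : T.IsInnerEdge e) :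
    ∃ x ∈ e, ∃ y ∈ e, x ≠ y := by
  obtain ⟨hmem, _, hnsing⟩ := he
  obtain ⟨x, hx⟩ := T.nonempty_of_mem e hmem
  by_contra hcon
  push_neg at hcon
  refine hnsing x ?_
  ext z
  simp only [Set.mem_singleton_iff]
  refine ⟨fun hz => (hcon x hx z hz).symm, ?_⟩
  rintro rfl; exact hx

/-- The chain with one partition inserted at position `p`. -/
def insChain {N : ℕ} (c : Fin (N + 1) → PartitionPoset A) (R : PartitionPoset A)
    (p : ℕ) : Fin (N + 2) → PartitionPoset A := fun j =>
  if j.val < p then c ⟨min j.val N, by have := min_le_right j.val N; omega⟩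
  else if j.val = p then R
  else c ⟨j.val - 1, by have := j.isLt; omega⟩

/-- The embedding skipping position `p`. -/
def insMap (N p : ℕ) : Fin (N + 1) → Fin (N + 2) := fun i =>
  if i.val < p then ⟨i.val, by have := i.isLt; omega⟩
  else ⟨i.val + 1, by have := i.isLt; omega⟩

/-- Insertion of one inner edge into a chain of partitions compatible with `T`. -/
theorem insert_edge (T : TreeOn A) {N : ℕ} (c : Fin (N + 1) → PartitionPoset A)
    (hmono : Monotone c) (hbl : ∀ i, (c i).blocks ⊆ T.edges)
    {e : Set A} (he : T.IsInnerEdge e) :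
    ∃ (c' : Fin (N + 2) → PartitionPoset A) (g : Fin (N + 1) → Fin (N + 2)),
      Monotone c' ∧ StrictMono g ∧ (∀ i, c' (g i) = c i) ∧
      (∀ i, (c' i).blocks ⊆ T.edges) ∧ (∃ i, e ∈ (c' i).blocks) := by
  classical
  obtain ⟨hemem, hneuniv, hnesing⟩ := he
  obtain ⟨x, hxe, y, hye, hxy⟩ := inner_two (T := T) ⟨hemem, hneuniv, hnesing⟩
  -- the levels at which `e` sits strictly inside a block form an initial segment
  have hdc : ∀ i j : Fin (N + 1), i ≤ j → (∃ b ∈ (c j).blocks, e ⊂ b) →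
      ∃ b ∈ (c i).blocks, e ⊂ b := by
    rintro i j hij ⟨b, hb, hsb⟩
    obtain ⟨z, rfl⟩ := hb
    refine ⟨{w | (c i).1 w z}, ⟨z, rfl⟩, lt_of_lt_of_le hsb ?_⟩
    intro w hw
    exact (PartitionPoset.le_iff.mp (hmono hij)) hw
  have hex : ∃ k, k = N + 1 ∨ ∃ h : k < N + 1, ¬ ∃ b ∈ (c ⟨k, h⟩).blocks, e ⊂ b :=
    ⟨N + 1, Or.inl rfl⟩
  set pnat := Nat.find hex with hpnatdef
  have hple : pnat ≤ N + 1 := Nat.find_le (Or.inl rfl)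
  have habove : ∀ i : Fin (N + 1), i.val < pnat → ∃ b ∈ (c i).blocks, e ⊂ b := by
    intro i hi
    have hmin := Nat.find_min hex hi
    push_neg at hmin
    obtain ⟨-, h2⟩ := hmin
    have h3 := h2 i.isLt
    simpa only [Fin.eta] using h3
  have hnabove : ∀ i : Fin (N + 1), pnat ≤ i.val → ¬ ∃ b ∈ (c i).blocks, e ⊂ b := by
    intro i hpi hex2
    have hiLt := i.isLt
    rcases Nat.find_spec hex with h | ⟨h, hna⟩
    · omega
    · exact hna (hdc ⟨pnat, h⟩ i hpi hex2)
  -- the base partition at the insertion point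
  obtain ⟨Qbase, hQdef⟩ :
      ∃ Q : Setoid A, Q = if h : pnat < N + 1 then (c ⟨pnat, h⟩).1 else ⊥ := ⟨_, rfl⟩
  have hQpos : ∀ h : pnat < N + 1, Qbase = (c ⟨pnat, h⟩).1 := fun h => by
    rw [hQdef, dif_pos h]
  have hQneg : ¬ pnat < N + 1 → Qbase = ⊥ := fun h => by rw [hQdef, dif_neg h]
  have hQclasses : Qbase.classes ⊆ T.edges := by
    intro b hb
    by_cases h : pnat < N + 1
    · rw [hQpos h] at hb
      exact hbl _ hb
    · rw [hQneg h] at hb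
      obtain ⟨a, rfl⟩ := bot_classes_singleton hb
      exact T.singleton_mem a
  have hQle : ∀ i : Fin (N + 1), pnat ≤ i.val → (c i).1 ≤ Qbase := by
    intro i hpi
    have h : pnat < N + 1 := lt_of_le_of_lt hpi i.isLt
    rw [hQpos h]
    exact PartitionPoset.le_iff.mp (hmono (show (⟨pnat, h⟩ : Fin (N + 1)) ≤ i from hpi))
  have hQge : ∀ i : Fin (N + 1), i.val < pnat → Qbase ≤ (c i).1 := by
    intro i hpi
    by_cases h : pnat < N + 1
    · rw [hQpos h]
      exact PartitionPoset.le_iff.mp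
        (hmono (show i ≤ (⟨pnat, h⟩ : Fin (N + 1)) from le_of_lt hpi))
    · rw [hQneg h]
      exact bot_le
  have hsat : ∀ ⦃a b : A⦄, Qbase a b → a ∈ e → b ∈ e := by
    intro a b hab ha
    by_cases h : pnat < N + 1
    · rw [hQpos h] at hab
      have hcls : {z | (c ⟨pnat, h⟩).1 z a} ∈ (c ⟨pnat, h⟩).blocks := ⟨a, rfl⟩
      have hbmem : b ∈ {z | (c ⟨pnat, h⟩).1 z a} := (c ⟨pnat, h⟩).1.symm' hab
      have hamem : a ∈ {z | (c ⟨pnat, h⟩).1 z a} := (c ⟨pnat, h⟩).1.refl' a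
      rcases T.laminar e hemem _ (hbl _ hcls) with hsub | hsub | hdisj
      · by_cases heq : e = {z | (c ⟨pnat, h⟩).1 z a}
        · rw [heq]; exact hbmem
        · exact absurd ⟨_, hcls, lt_of_le_of_ne hsub heq⟩
            (hnabove ⟨pnat, h⟩ (le_refl pnat))
      · exact hsub hbmem
      · exact absurd (Set.mem_inter ha hamem) (by rw [hdisj]; exact id)
    · rw [hQneg h] at hab
      rw [Setoid.bot_def] at hab
      exact hab ▸ ha
  -- the inserted partition
  have hRne_bot : satJoin Qbase e hsat ≠ ⊥ := by
    intro hbot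
    have hrel : satJoin Qbase e hsat x y := satJoin_rel.mpr (Or.inr ⟨hxe, hye⟩)
    rw [hbot, Setoid.bot_def] at hrel
    exact hxy hrel
  have hRne_top : satJoin Qbase e hsat ≠ ⊤ := by
    obtain ⟨a, hae⟩ := (Set.ne_univ_iff_exists_notMem e).1 hneuniv
    intro htop
    have hrel : satJoin Qbase e hsat x a := by
      rw [htop, Setoid.top_def]; trivial
    rcases satJoin_rel.mp hrel with hq | ⟨_, hax⟩
    · exact hae (hsat hq hxe)
    · exact hae hax
  obtain ⟨R, hRdef⟩ : ∃ R : PartitionPoset A,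
      R = ⟨satJoin Qbase e hsat, hRne_bot, hRne_top⟩ := ⟨_, rfl⟩
  have hRblocks : R.blocks ⊆ T.edges := by
    intro b hb
    rw [hRdef] at hb
    rcases Set.mem_insert_iff.mp (satJoin_classes (hsat := hsat) hb) with rfl | hb'
    · exact hemem
    · exact hQclasses hb'
  have heR : e ∈ R.blocks := by
    rw [hRdef]
    exact mem_satJoin_classes (hsat := hsat) ⟨x, hxe⟩
  have hRle : ∀ i : Fin (N + 1), i.val < pnat → c i ≤ R := by
    intro i hi
    rw [hRdef]
    refine PartitionPoset.le_iff.mpr ?_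
    intro a b hab
    rcases (satJoin_rel (hsat := hsat)).mp hab with hq | ⟨hae, hbe⟩
    · exact hQge i hi hq
    · obtain ⟨bk, hbk, hsb⟩ := habove i hi
      obtain ⟨z, rfl⟩ := hbk
      have ha' : (c i).1 a z := le_of_lt hsb hae
      have hb' : (c i).1 b z := le_of_lt hsb hbe
      exact (c i).1.trans' ha' ((c i).1.symm' hb')
  have hRge : ∀ i : Fin (N + 1), pnat ≤ i.val → R ≤ c i := by
    intro i hi
    rw [hRdef]
    refine PartitionPoset.le_iff.mpr ?_
    intro a b hab
    exact (satJoin_rel (hsat := hsat)).mpr (Or.inl (hQle i hi hab))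
  -- the extended chain
  refine ⟨insChain c R pnat, insMap N pnat, ?_, ?_, ?_, ?_, ?_⟩
  · -- Monotone c'
    intro j k hjk
    have hjk' : j.val ≤ k.val := hjk
    have hjLt := j.isLt
    have hkLt := k.isLt
    dsimp only [insChain]
    split_ifs
    all_goals first
      | exact le_refl R
      | (exfalso; omega)
      | exact hmono (show min j.val N ≤ min k.val N by omega)
      | exact hmono (show min j.val N ≤ k.val - 1 by omega)
      | exact hmono (show j.val - 1 ≤ k.val - 1 by omega)
      | exact hRle ⟨min j.val N, by omega⟩ (show min j.val N < pnat by omega)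
      | exact hRge ⟨k.val - 1, by omega⟩ (show pnat ≤ k.val - 1 by omega)
  · -- StrictMono g
    intro i j hij
    have hij' : i.val < j.val := hij
    have hiLt := i.isLt
    have hjLt := j.isLt
    dsimp only [insMap]
    split_ifs <;> exact Fin.mk_lt_mk.mpr (by omega)
  · -- c' (g i) = c i
    intro i
    have hiLt := i.isLt
    by_cases h : i.val < pnat
    · have hgi : insMap N pnat i = ⟨i.val, by omega⟩ := by
        dsimp only [insMap]; rw [if_pos h]
      rw [hgi]
      dsimp only [insChain]
      rw [if_pos h]
      exact congrArg c (Fin.ext (show min i.val N = i.val by omega))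
    · have hgi : insMap N pnat i = ⟨i.val + 1, by omega⟩ := by
        dsimp only [insMap]; rw [if_neg h]
      rw [hgi]
      dsimp only [insChain]
      rw [if_neg (show ¬ i.val + 1 < pnat by omega),
        if_neg (show ¬ i.val + 1 = pnat by omega)]
      exact congrArg c (Fin.ext (show i.val + 1 - 1 = i.val by omega))
  · -- blocks compatible
    intro j
    dsimp only [insChain]
    split_ifs
    · exact hbl _
    · exact hRblocks
    · exact hbl _
  · -- e is covered
    refine ⟨⟨pnat, by omega⟩, ?_⟩
    dsimp only [insChain]
    rw [if_neg (lt_irrefl pnat), if_pos rfl]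
    exact heR

theorem extend_chain (T : TreeOn A) [Finite A] (k : ℕ) :
    ∀ (N : ℕ) (c : Fin (N + 1) → PartitionPoset A), Monotone c →
    (∀ i, (c i).blocks ⊆ T.edges) →
    {e | T.IsInnerEdge e ∧ ∀ i, e ∉ (c i).blocks}.ncard ≤ k →
    ∃ (M : ℕ) (c' : Fin (M + 1) → PartitionPoset A) (g : Fin (N + 1) → Fin (M + 1)),
      Monotone c' ∧ StrictMono g ∧ (∀ i, c' (g i) = c i) ∧
      (∀ i, (c' i).blocks ⊆ T.edges) ∧
      (∀ e, T.IsInnerEdge e → ∃ i, e ∈ (c' i).blocks) := by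
  induction k with
  | zero =>
    intro N c hm hb hcard
    refine ⟨N, c, id, hm, strictMono_id, fun i => rfl, hb, ?_⟩
    intro e hee
    by_contra hno
    push_neg at hno
    have hmem : e ∈ {e | T.IsInnerEdge e ∧ ∀ i, e ∉ (c i).blocks} := ⟨hee, hno⟩
    have : {e | T.IsInnerEdge e ∧ ∀ i, e ∉ (c i).blocks} = ∅ := by
      rw [← Set.ncard_eq_zero (Set.toFinite _)]
      omega
    rw [this] at hmem
    exact hmem
  | succ k ih =>
    intro N c hm hb hcard
    by_cases hemp : {e | T.IsInnerEdge e ∧ ∀ i, e ∉ (c i).blocks} = ∅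
    · refine ⟨N, c, id, hm, strictMono_id, fun i => rfl, hb, ?_⟩
      intro e hee
      by_contra hno
      push_neg at hno
      have hmem : e ∈ {e | T.IsInnerEdge e ∧ ∀ i, e ∉ (c i).blocks} := ⟨hee, hno⟩
      rw [hemp] at hmem
      exact hmem
    · obtain ⟨e, hee, hno⟩ := Set.nonempty_iff_ne_empty.2 hemp
      obtain ⟨c₁, g₁, hm₁, hg₁, hcg₁, hb₁, i₀, hei₀⟩ := insert_edge T c hm hb hee
      have hsub : {f | T.IsInnerEdge f ∧ ∀ i, f ∉ (c₁ i).blocks} ⊆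
          {f | T.IsInnerEdge f ∧ ∀ i, f ∉ (c i).blocks} \ {e} := by
        rintro f ⟨hf, hfn⟩
        refine ⟨⟨hf, fun i hfi => hfn (g₁ i) (by rw [hcg₁]; exact hfi)⟩, ?_⟩
        intro hfe
        simp only [Set.mem_singleton_iff] at hfe
        exact hfn i₀ (hfe ▸ hei₀)
      have hcard' : {f | T.IsInnerEdge f ∧ ∀ i, f ∉ (c₁ i).blocks}.ncard ≤ k := by
        have h1 := Set.ncard_le_ncard hsub (Set.toFinite _)
        have h2 : ({f | T.IsInnerEdge f ∧ ∀ i, f ∉ (c i).blocks} \ {e}).ncard =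
            {f | T.IsInnerEdge f ∧ ∀ i, f ∉ (c i).blocks}.ncard - 1 :=
          Set.ncard_diff_singleton_of_mem ⟨hee, hno⟩
        have h3 : 1 ≤ {f | T.IsInnerEdge f ∧ ∀ i, f ∉ (c i).blocks}.ncard :=
          (Set.ncard_pos (Set.toFinite _)).2 ⟨e, hee, hno⟩
        omega
      obtain ⟨M, c', g₂, hm', hg₂, hcg₂, hb', hcov⟩ := ih (N + 1) c₁ hm₁ hb₁ hcard'
      exact ⟨M, c', g₂ ∘ g₁, hm', hg₂.comp hg₁,
        fun i => by simp only [Function.comp_apply, hcg₂, hcg₁],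
        hb', hcov⟩

end FaceLayeringAux

/-- A simplex `σ` of the partition complex `NP(A)` is a face of a layering of the tree
`T` (i.e. the image of a simplex `τ` with `φ(τ) = T` under an injective simplicial
operator) if and only if there exists a morphism `φ(σ) ⟶ T` in `T⁺(A)`. -/
theorem face_of_layering_iff_hom (A : Type) [Fintype A] (T : TreePlus A)
    (m : SimplexCategory) (σ : (partitionComplex A).obj (op m)) :
    (∃ (m' : SimplexCategory) (τ : (partitionComplex A).obj (op m')) (g : m ⟶ m'),
        Function.Injective g.toOrderHom ∧ IsLayering τ T.1 ∧
        σ = (partitionComplex A).map g.op τ) ↔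
      Nonempty ((phiFunctor A).obj ⟨m, σ⟩ ⟶ T) := by
  constructor
  · rintro ⟨m', τ, g, hinj, hlay, rfl⟩
    refine ⟨homOfLE ?_⟩
    show (chainTree ((partitionComplex A).map g.op τ)).edges ⊆ T.1.edges
    rintro f ((hf | ⟨a, rfl⟩) | hf)
    · simp only [Set.mem_singleton_iff] at hf
      subst hf
      exact T.1.univ_mem
    · exact T.1.singleton_mem a
    · simp only [Set.mem_iUnion] at hf
      obtain ⟨i, hi⟩ := hf
      have hi' : f ∈ (τ.obj (g.toOrderHom i)).blocks := hi
      have : f ∈ (chainTree τ).edges :=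
        Or.inr (Set.mem_iUnion.2 ⟨g.toOrderHom i, hi'⟩)
      rw [hlay] at this
      exact this
  · rintro ⟨h⟩
    have hedges : (chainTree σ).edges ⊆ T.1.edges := leOfHom h
    have hbl : ∀ i : Fin (m.len + 1), (σ.obj i).blocks ⊆ T.1.edges := fun i b hb =>
      hedges (Or.inr (Set.mem_iUnion.2 ⟨i, hb⟩))
    have hmono : Monotone (fun i : Fin (m.len + 1) => σ.obj i) :=
      fun i j hij => leOfHom (σ.map (homOfLE hij))
    obtain ⟨M, c', g, hm', hg, hcg, hb', hcov⟩ :=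
      FaceLayeringAux.extend_chain T.1
        ({e | T.1.IsInnerEdge e ∧ ∀ i, e ∉ ((fun i : Fin (m.len + 1) => σ.obj i) i).blocks}.ncard)
        m.len (fun i => σ.obj i) hmono hbl le_rfl
    refine ⟨SimplexCategory.mk M, hm'.functor,
      SimplexCategory.Hom.mk ⟨g, hg.monotone⟩, hg.injective, ?_, ?_⟩
    · -- IsLayering
      refine TreeOn.ext (Set.Subset.antisymm ?_ ?_)
      · rintro f ((hf | ⟨a, rfl⟩) | hf)
        · simp only [Set.mem_singleton_iff] at hf
          subst hf
          exact T.1.univ_mem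
        · exact T.1.singleton_mem a
        · simp only [Set.mem_iUnion] at hf
          obtain ⟨i, hi⟩ := hf
          exact hb' i hi
      · intro f hf
        by_cases hu : f = Set.univ
        · exact Or.inl (Or.inl (by simp [hu]))
        · by_cases hs : ∃ a : A, f = {a}
          · obtain ⟨a, rfl⟩ := hs
            exact Or.inl (Or.inr ⟨a, rfl⟩)
          · push_neg at hs
            obtain ⟨i, hi⟩ := hcov f ⟨hf, hu, hs⟩
            exact Or.inr (Set.mem_iUnion.2 ⟨i, hi⟩)
    · -- σ is the face of the layering
      refine CategoryTheory.Functor.ext (fun i => ?_) (fun i j f => Subsingleton.elim _ _)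
      exact (hcg i).symm

end
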